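/- The pop-push indices generated by the Hanoi encoding of move(s,t,a,I,m) are exactly the interval [m, 2^{|I|} + m − 2]: the multiset of counter indices at which pop_push steps occur is {m, m+1, …, m + 2^{|I|} − 2}, each occurring exactly once. -/

import Mathlib

/-- The list of counter indices at which pop-push steps occur during
`move(s,t,a,I,m)` with `|I| = n` and initial counter `m`:
`move` on a stack of size `n+1` performs the pop-push steps of the first
recursive call (counter `m`), then a pop-push at counter `2^n + m - 1`,
then the pop-push steps of the second recursive call (counter `2^n + m`). -/
def idx : ℕ → ℕ → List ℕ
  | 0, _ => []
  | n + 1, m => idx n m ++ [2 ^ n + m - 1] ++ idx n (2 ^ n + m)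

/-- The pop-push indices generated by the Hanoi encoding are exactly the
consecutive integers from `m` of length `2^n - 1`. -/
theorem stmt_9 (n m : ℕ) : idx n m = List.range' m (2 ^ n - 1) := by
  induction n generalizing m with
  | zero => simp [idx]
  | succ n ih =>
    have h1 : 1 ≤ 2 ^ n := Nat.one_le_two_pow
    rw [idx, ih, ih]
    have e1 : ([2 ^ n + m - 1] : List ℕ) = List.range' (m + (2 ^ n - 1)) 1 := by
      simp; omega
    rw [e1, show m + (2^n-1) = m + 1*(2^n-1) by ring, List.range'_append,
      show 2 ^ n + m = m + 1 * (2 ^ n - 1 + 1) by omega, List.range'_append]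
    congr 1
    omega
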